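/- Let R be a simplicial commutative F₂-algebra, let 2 ≤ i ≤ q, and let z ∈ R_q satisfy d_j(z) = 0 for all 0 ≤ j ≤ q. Then μ(D^{q−i}_{q,q}(z⊗z)) = δ_i(z) in R_{q+i}, where μ : R_{q+i}⊗R_{q+i} → R_{q+i} is the multiplication and D^{q−i} is the higher Eilenberg–MacLane map applied to the underlying simplicial F₂-vector space of R in both tensor factors. In other words, Dwyer's representative Θ_i(z) = μD^{q−i}(z⊗z) + μD^{q−i−1}(z⊗∂z) of the homotopy operation δ_i on a normalized cycle z is given by the explicit formula δ_i(z) = Σ_{(μ,ν)∈V(q,i)} s_{ν_i}⋯s_{ν_1}(z)·s_{μ_i}⋯s_{μ_1}(z). -/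

import Mathlib

open scoped TensorProduct

noncomputable section

/-- A (possibly degenerate) collection of data for a simplicial `F₂`-vector space:
a family of `ZMod 2`-modules together with face maps `d n j : X n → X (n-1)`
and degeneracy maps `s n j : X n → X (n+1)`.  The simplicial identities are
required via the predicate `SVS.IsSimplicial` below. -/
structure SVS : Type 1 where
  X : ℕ → Type
  grp : ∀ n, AddCommGroup (X n)
  mod : ∀ n, Module (ZMod 2) (X n)
  d : ∀ n, ℕ → (X n →ₗ[ZMod 2] X (n - 1))
  s : ∀ n, ℕ → (X n →ₗ[ZMod 2] X (n + 1))

attribute [instance] SVS.grp SVS.mod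

namespace SVS

/-- Transport along an equality of degrees. -/
def xcast (V : SVS) {m n : ℕ} (h : m = n) : V.X m →ₗ[ZMod 2] V.X n := by
  subst h; exact LinearMap.id

/-- The simplicial identities, in the (complete) ranges where both sides make sense. -/
structure IsSimplicial (V : SVS) : Prop where
  dd : ∀ n i j, i < j → j ≤ n + 2 →
    (V.d (n+1) i).comp (V.d (n+2) j) = (V.d (n+1) (j-1)).comp (V.d (n+2) i)
  ss : ∀ n i j, i ≤ j → j ≤ n →
    (V.s (n+1) i).comp (V.s n j) = (V.s (n+1) (j+1)).comp (V.s n i)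
  ds_lt : ∀ n i j, i < j → j ≤ n + 1 →
    (V.d (n+2) i).comp (V.s (n+1) j) = (V.s n (j-1)).comp (V.d (n+1) i)
  ds_eq : ∀ n i j, (i = j ∨ i = j + 1) → j ≤ n →
    (V.d (n+1) i).comp (V.s n j) = LinearMap.id
  ds_gt : ∀ n i j, j + 1 < i → i ≤ n + 2 →
    (V.d (n+2) i).comp (V.s (n+1) j) = (V.s n j).comp (V.d (n+1) (i-1))

/-- The suspension `S(V)`, with `S(V)_n = V_{n+1}`, `d_j = d_{j+1}`, `s_j = s_{j+1}`. -/
def susp (V : SVS) : SVS where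
  X := fun n => V.X (n+1)
  grp := fun n => V.grp (n+1)
  mod := fun n => V.mod (n+1)
  d := fun n => match n with
    | 0 => fun _ => 0
    | m+1 => fun j => V.d (m+2) (j+1)
  s := fun n j => V.s (n+1) (j+1)

/-- The `k`-fold suspension `S^k(V)`, with `S^k(V)_n = V_{n+k}`, `d_j = d_{j+k}`,
`s_j = s_{j+k}`.  Evaluating a natural transformation at `shift V k` realizes its
`k`-fold suspension ("replace every `d_r` by `d_{r+k}` and every `s_r` by `s_{r+k}`"). -/
def shift (V : SVS) (k : ℕ) : SVS where
  X := fun n => V.X (n+k)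
  grp := fun n => V.grp (n+k)
  mod := fun n => V.mod (n+k)
  d := fun n j =>
    if h : 1 ≤ n then (V.xcast (by omega)).comp (V.d (n+k) (j+k)) else 0
  s := fun n j => (V.xcast (by omega)).comp (V.s (n+k) (j+k))

end SVS

/-- A simplicial map (morphism of simplicial `F₂`-vector spaces). -/
structure SMap (V W : SVS) where
  f : ∀ n, V.X n →ₗ[ZMod 2] W.X n
  comm_d : ∀ n j, j ≤ n + 1 →
    (f n).comp (V.d (n+1) j) = (W.d (n+1) j).comp (f (n+1))
  comm_s : ∀ n j, j ≤ n →
    (f (n+1)).comp (V.s n j) = (W.s n j).comp (f n)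

/-- Iterated degeneracies: `sIter V [a₁, …, aᵣ] q = s_{aᵣ} ∘ ⋯ ∘ s_{a₁}` applied from degree `q`
(the head of the list is applied first). -/
def sIter (V : SVS) : (l : List ℕ) → (q : ℕ) → (V.X q →ₗ[ZMod 2] V.X (q + l.length))
  | [], _ => LinearMap.id
  | a :: t, q =>
    (V.xcast (show q + 1 + t.length = q + (t.length + 1) by omega)).comp
      ((sIter V t (q+1)).comp (V.s q a))

/-- Iterated degeneracies, with the target degree given explicitly. -/
def sIterTo (V : SVS) (q m : ℕ) (l : List ℕ) (h : q + l.length = m) :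
    V.X q →ₗ[ZMod 2] V.X m :=
  (V.xcast h).comp (sIter V l q)

/-- `V_a ⊗ W_b` over `F₂`. -/
abbrev TT (V W : SVS) (a b : ℕ) : Type :=
  TensorProduct (ZMod 2) (V.X a) (W.X b)

/-- Transport of tensor products along equalities of degrees. -/
def tcast (V W : SVS) {a b c e : ℕ} (h1 : a = c) (h2 : b = e) :
    TT V W a b →ₗ[ZMod 2] TT V W c e :=
  TensorProduct.map (V.xcast h1) (W.xcast h2)

/-- The twist `T : V_a ⊗ W_b → W_b ⊗ V_a`. -/
def twist (V W : SVS) (a b : ℕ) : TT V W a b →ₗ[ZMod 2] TT W V b a :=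
  (TensorProduct.comm (ZMod 2) _ _).toLinearMap

/-- `(i,j)`-shuffles, encoded as pairs `(μ, ν)` of subsets of `{0, …, i+j-1}` with
`μ.card = i`, `ν.card = j`, disjoint with union everything; the increasing enumeration
of a set gives the corresponding increasing sequence. -/
def shuffles (i j : ℕ) : Finset (Finset ℕ × Finset ℕ) :=
  ((Finset.range (i+j)).powersetCard i ×ˢ (Finset.range (i+j)).powersetCard j).filter
    fun p => Disjoint p.1 p.2 ∧ p.1 ∪ p.2 = Finset.range (i+j)

lemma shuffles_card₁ {i j : ℕ} {p : Finset ℕ × Finset ℕ} (hp : p ∈ shuffles i j) :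
    p.1.card = i := by
  simp only [shuffles, Finset.mem_filter, Finset.mem_product, Finset.mem_powersetCard] at hp
  exact hp.1.1.2

lemma shuffles_card₂ {i j : ℕ} {p : Finset ℕ × Finset ℕ} (hp : p ∈ shuffles i j) :
    p.2.card = j := by
  simp only [shuffles, Finset.mem_filter, Finset.mem_product, Finset.mem_powersetCard] at hp
  exact hp.1.2.2

/-- The increasing enumeration of a finite set of naturals. -/
def sortAsc (s : Finset ℕ) : List ℕ := s.sort (· ≤ ·)

lemma length_sortAsc (s : Finset ℕ) : (sortAsc s).length = s.card :=
  Finset.length_sort _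

/-- The Eilenberg–MacLane shuffle map
`D_{i,j} = Σ_{(i,j)-shuffles (μ,ν)} (s_{ν_j}⋯s_{ν_1}) ⊗ (s_{μ_i}⋯s_{μ_1}) :
V_i ⊗ W_j → V_{i+j} ⊗ W_{i+j}`. -/
def Dmap (V W : SVS) (i j : ℕ) : TT V W i j →ₗ[ZMod 2] TT V W (i+j) (i+j) :=
  ∑ p ∈ (shuffles i j).attach,
    TensorProduct.map
      (sIterTo V i (i+j) (sortAsc p.1.2) (by rw [length_sortAsc, shuffles_card₂ p.2]))
      (sIterTo W j (i+j) (sortAsc p.1.1) (by rw [length_sortAsc, shuffles_card₁ p.2]; omega))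

open SVS in
/-- `D⁰_{i,j} = S(D_{i-1,j}) ∘ (id ⊗ s₀)`, zero when `i = 0`. -/
def D0 (V W : SVS) : (i j : ℕ) → (TT V W i j →ₗ[ZMod 2] TT V W (i+j) (i+j))
  | 0, _ => 0
  | i'+1, j =>
    (tcast V W (show i'+j+1 = i'+1+j by omega) (show i'+j+1 = i'+1+j by omega)).comp
      ((Dmap (susp V) (susp W) i' j).comp
        (TensorProduct.map LinearMap.id (W.s j 0)))

open SVS in
/-- The higher Eilenberg–MacLane maps `D^k_{i,j} : V_i ⊗ W_j → V_{i+j-k} ⊗ W_{i+j-k}`,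
defined recursively: `D^0` as above, and for `k ≥ 1`,
`D^k_{i,j} = S(D^{k-1}_{i-1,j-1}) + D^{k-1}_{i-1,j}∘(d₀⊗id)` (`k` even),
`D^k_{i,j} = S(D^{k-1}_{i-1,j-1}) + D^{k-1}_{i,j-1}∘(id⊗d₀)` (`k` odd);
any term involving a negative index is zero. -/
def Dk : (k : ℕ) → (V W : SVS) → (i j : ℕ) →
    (TT V W i j →ₗ[ZMod 2] TT V W (i+j-k) (i+j-k))
  | 0, V, W, i, j => D0 V W i j
  | k+1, V, W, i, j =>
    (match i, j with
     | i'+1, j'+1 =>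
       if h : k ≤ i' + j' then
         (tcast V W (show i'+j'-k+1 = i'+1+(j'+1)-(k+1) by omega)
            (show i'+j'-k+1 = i'+1+(j'+1)-(k+1) by omega)).comp
           (Dk k (susp V) (susp W) i' j')
       else 0
     | _, _ => 0)
    +
    (if (k+1) % 2 = 0 then
      (match i with
       | 0 => 0
       | i'+1 =>
         (tcast V W (show i'+j-k = i'+1+j-(k+1) by omega)
            (show i'+j-k = i'+1+j-(k+1) by omega)).comp
           ((Dk k V W i' j).comp (TensorProduct.map (V.d (i'+1) 0) LinearMap.id)))
     else
      (match j with
       | 0 => 0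
       | j'+1 =>
         (tcast V W (show i+j'-k = i+(j'+1)-(k+1) by omega)
            (show i+j'-k = i+(j'+1)-(k+1) by omega)).comp
           ((Dk k V W i j').comp (TensorProduct.map LinearMap.id (W.d (j'+1) 0)))))

/-- `φ_k : V_i ⊗ W_j → V_{i+j-k} ⊗ W_{i+j-k}`: the identity if `i = j = k`, zero otherwise. -/
def phi (V W : SVS) (k i j : ℕ) : TT V W i j →ₗ[ZMod 2] TT V W (i+j-k) (i+j-k) :=
  if h : i = k ∧ j = k then
    tcast V W (show i = i+j-k by rcases h with ⟨h1, h2⟩; omega)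
      (show j = i+j-k by rcases h with ⟨h1, h2⟩; omega)
  else 0

/-- `∂ ⊗ id = Σ_{0 ≤ r ≤ a} d_r ⊗ id : V_a ⊗ W_b → V_{a-1} ⊗ W_b`. -/
def bdryL (V W : SVS) (a b : ℕ) : TT V W a b →ₗ[ZMod 2] TT V W (a-1) b :=
  ∑ r ∈ Finset.range (a+1), TensorProduct.map (V.d a r) LinearMap.id

/-- `id ⊗ ∂ = Σ_{0 ≤ r ≤ b} id ⊗ d_r : V_a ⊗ W_b → V_a ⊗ W_{b-1}`. -/
def bdryR (V W : SVS) (a b : ℕ) : TT V W a b →ₗ[ZMod 2] TT V W a (b-1) :=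
  ∑ r ∈ Finset.range (b+1), TensorProduct.map LinearMap.id (W.d b r)

/-- `δ = Σ_{0 ≤ r ≤ min a b} d_r ⊗ d_r : V_a ⊗ W_b → V_{a-1} ⊗ W_{b-1}`. -/
def delMap (V W : SVS) (a b : ℕ) : TT V W a b →ₗ[ZMod 2] TT V W (a-1) (b-1) :=
  ∑ r ∈ Finset.range (min a b + 1), TensorProduct.map (V.d a r) (W.d b r)

/-- The twisted map `T ∘ D⁰_{j,i} ∘ T : V_i ⊗ W_j → V_{i+j} ⊗ W_{i+j}`
(`D⁰_{j,i}` evaluated on the pair `(W, V)`). -/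
def TD0T (V W : SVS) (i j : ℕ) : TT V W i j →ₗ[ZMod 2] TT V W (i+j) (i+j) :=
  (tcast V W (show j+i = i+j by omega) (show j+i = i+j by omega)).comp
    ((twist W V (j+i) (j+i)).comp ((D0 W V j i).comp (twist V W i j)))

/-- The twisted map `T ∘ D^k_{j,i} ∘ T : V_i ⊗ W_j → V_{i+j-k} ⊗ W_{i+j-k}`. -/
def TDkT (k : ℕ) (V W : SVS) (i j : ℕ) : TT V W i j →ₗ[ZMod 2] TT V W (i+j-k) (i+j-k) :=
  (tcast V W (show j+i-k = i+j-k by omega) (show j+i-k = i+j-k by omega)).comp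
    ((twist W V (j+i-k) (j+i-k)).comp ((Dk k W V j i).comp (twist V W i j)))

open SVS in
/-- `A⁰ = D⁰ + TD⁰T + D`, and for `k ≥ 1`
`A^k = D^k + TD^kT + δ∘D^{k-1} + D^{k-1}∘(∂⊗id) + D^{k-1}∘(id⊗∂)`
(terms with a negative index being zero). -/
def Ak : (k : ℕ) → (V W : SVS) → (i j : ℕ) →
    (TT V W i j →ₗ[ZMod 2] TT V W (i+j-k) (i+j-k))
  | 0, V, W, i, j => D0 V W i j + TD0T V W i j + Dmap V W i j
  | k+1, V, W, i, j =>
    Dk (k+1) V W i j + TDkT (k+1) V W i j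
    + (tcast V W (show i+j-k-1 = i+j-(k+1) by omega)
        (show i+j-k-1 = i+j-(k+1) by omega)).comp
        ((delMap V W (i+j-k) (i+j-k)).comp (Dk k V W i j))
    + (match i with
       | 0 => 0
       | i'+1 =>
         (tcast V W (show i'+j-k = i'+1+j-(k+1) by omega)
            (show i'+j-k = i'+1+j-(k+1) by omega)).comp
           ((Dk k V W i' j).comp (bdryL V W (i'+1) j)))
    + (match j with
       | 0 => 0
       | j'+1 =>
         (tcast V W (show i+j'-k = i+(j'+1)-(k+1) by omega)
            (show i+j'-k = i+(j'+1)-(k+1) by omega)).comp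
           ((Dk k V W i j').comp (bdryR V W i (j'+1))))

open SVS in
/-- The suspension term `S(A^k_{i-1,j-1}) : V_i ⊗ W_j → V_{i+j-(k+1)} ⊗ W_{i+j-(k+1)}`
(zero if a negative index occurs). -/
def AsuspTerm (k : ℕ) (V W : SVS) (i j : ℕ) :
    TT V W i j →ₗ[ZMod 2] TT V W (i+j-(k+1)) (i+j-(k+1)) :=
  match i, j with
  | i'+1, j'+1 =>
    if h : k ≤ i' + j' then
      (tcast V W (show i'+j'-k+1 = i'+1+(j'+1)-(k+1) by omega)
         (show i'+j'-k+1 = i'+1+(j'+1)-(k+1) by omega)).comp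
        (Ak k (susp V) (susp W) i' j')
    else 0
  | _, _ => 0

/-- The term `A^k_{i-1,j} ∘ (d₀ ⊗ id) : V_i ⊗ W_j → V_{i+j-(k+1)} ⊗ W_{i+j-(k+1)}`
(zero if `i = 0`). -/
def Ad0Term (k : ℕ) (V W : SVS) (i j : ℕ) :
    TT V W i j →ₗ[ZMod 2] TT V W (i+j-(k+1)) (i+j-(k+1)) :=
  match i with
  | 0 => 0
  | i'+1 =>
    (tcast V W (show i'+j-k = i'+1+j-(k+1) by omega)
       (show i'+j-k = i'+1+j-(k+1) by omega)).comp
      ((Ak k V W i' j).comp (TensorProduct.map (V.d (i'+1) 0) LinearMap.id))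

/-- The term `A^k_{i,j-1} ∘ (id ⊗ d₀) : V_i ⊗ W_j → V_{i+j-(k+1)} ⊗ W_{i+j-(k+1)}`
(zero if `j = 0`). -/
def Aid0Term (k : ℕ) (V W : SVS) (i j : ℕ) :
    TT V W i j →ₗ[ZMod 2] TT V W (i+j-(k+1)) (i+j-(k+1)) :=
  match j with
  | 0 => 0
  | j'+1 =>
    (tcast V W (show i+j'-k = i+(j'+1)-(k+1) by omega)
       (show i+j'-k = i+(j'+1)-(k+1) by omega)).comp
      ((Ak k V W i j').comp (TensorProduct.map LinearMap.id (W.d (j'+1) 0)))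

/-- The index set `V(q,i)`: pairs `(μ, ν)` of `i`-element subsets of
`{q-i, …, q+i-1}`, disjoint with union everything, and `q-i ∈ μ`
(i.e. `μ₁ = q-i` for the increasing enumerations). -/
def deltaSet (q i : ℕ) : Finset (Finset ℕ × Finset ℕ) :=
  ((Finset.Ico (q-i) (q+i)).powersetCard i ×ˢ (Finset.Ico (q-i) (q+i)).powersetCard i).filter
    fun p => Disjoint p.1 p.2 ∧ p.1 ∪ p.2 = Finset.Ico (q-i) (q+i) ∧ q-i ∈ p.1

lemma deltaSet_card₁ {q i : ℕ} {p : Finset ℕ × Finset ℕ} (hp : p ∈ deltaSet q i) :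
    p.1.card = i := by
  simp only [deltaSet, Finset.mem_filter, Finset.mem_product, Finset.mem_powersetCard] at hp
  exact hp.1.1.2

lemma deltaSet_card₂ {q i : ℕ} {p : Finset ℕ × Finset ℕ} (hp : p ∈ deltaSet q i) :
    p.2.card = i := by
  simp only [deltaSet, Finset.mem_filter, Finset.mem_product, Finset.mem_powersetCard] at hp
  exact hp.1.2.2

/-- Data of a simplicial commutative `F₂`-algebra: a family of commutative
`ZMod 2`-algebras with face and degeneracy maps which are algebra maps;
the simplicial identities are required via `SAlg.IsSimplicial`. -/
structure SAlg : Type 1 where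
  X : ℕ → Type
  ring : ∀ n, CommRing (X n)
  alg : ∀ n, Algebra (ZMod 2) (X n)
  d : ∀ n, ℕ → (X n →ₐ[ZMod 2] X (n - 1))
  s : ∀ n, ℕ → (X n →ₐ[ZMod 2] X (n + 1))

attribute [instance] SAlg.ring SAlg.alg

namespace SAlg

def acast (R : SAlg) {m n : ℕ} (h : m = n) : R.X m →ₐ[ZMod 2] R.X n := by
  subst h; exact AlgHom.id _ _

structure IsSimplicial (R : SAlg) : Prop where
  dd : ∀ n i j, i < j → j ≤ n + 2 →
    (R.d (n+1) i).comp (R.d (n+2) j) = (R.d (n+1) (j-1)).comp (R.d (n+2) i)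
  ss : ∀ n i j, i ≤ j → j ≤ n →
    (R.s (n+1) i).comp (R.s n j) = (R.s (n+1) (j+1)).comp (R.s n i)
  ds_lt : ∀ n i j, i < j → j ≤ n + 1 →
    (R.d (n+2) i).comp (R.s (n+1) j) = (R.s n (j-1)).comp (R.d (n+1) i)
  ds_eq : ∀ n i j, (i = j ∨ i = j + 1) → j ≤ n →
    (R.d (n+1) i).comp (R.s n j) = AlgHom.id _ _
  ds_gt : ∀ n i j, j + 1 < i → i ≤ n + 2 →
    (R.d (n+2) i).comp (R.s (n+1) j) = (R.s n j).comp (R.d (n+1) (i-1))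

/-- The underlying simplicial `F₂`-vector space of a simplicial `F₂`-algebra. -/
def toSVS (R : SAlg) : SVS where
  X := R.X
  grp := fun n => inferInstance
  mod := fun n => inferInstance
  d := fun n j => (R.d n j).toLinearMap
  s := fun n j => (R.s n j).toLinearMap

end SAlg

/-- Iterated degeneracies for a simplicial algebra (head of the list applied first). -/
def sIterA (R : SAlg) : (l : List ℕ) → (q : ℕ) → (R.X q →ₐ[ZMod 2] R.X (q + l.length))
  | [], _ => AlgHom.id _ _
  | a :: t, q =>
    (R.acast (show q + 1 + t.length = q + (t.length + 1) by omega)).comp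
      ((sIterA R t (q+1)).comp (R.s q a))

def sIterATo (R : SAlg) (q m : ℕ) (l : List ℕ) (h : q + l.length = m) :
    R.X q →ₐ[ZMod 2] R.X m :=
  (R.acast h).comp (sIterA R l q)

/-- The explicit formula
`δ_i(z) = Σ_{(μ,ν) ∈ V(q,i)} s_{ν_i}⋯s_{ν_1}(z) · s_{μ_i}⋯s_{μ_1}(z) ∈ R_{q+i}`. -/
def deltaOp (R : SAlg) (q i : ℕ) (z : R.X q) : R.X (q+i) :=
  ∑ p ∈ (deltaSet q i).attach,
    (sIterATo R q (q+i) (sortAsc p.1.2)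
        (by rw [length_sortAsc, deltaSet_card₂ p.2]) z)
      * (sIterATo R q (q+i) (sortAsc p.1.1)
        (by rw [length_sortAsc, deltaSet_card₁ p.2]) z)

/-- Multiplication `μ : R_m ⊗ R_m → R_m` as a linear map. -/
def mulMap (R : SAlg) (m : ℕ) :
    TensorProduct (ZMod 2) (R.X m) (R.X m) →ₗ[ZMod 2] R.X m :=
  TensorProduct.lift (LinearMap.mul (ZMod 2) (R.X m))

open SimplexCategory CategoryTheory in
/-- The suspension `S′(α)` of a morphism `α : [m] → [n]` in the simplex category:
`S′(α)(0) = 0` and `S′(α)(i) = α(i-1) + 1` for `i ≥ 1`. -/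
def suspMor {x y : SimplexCategory} (f : x ⟶ y) :
    SimplexCategory.mk (x.len + 1) ⟶ SimplexCategory.mk (y.len + 1) :=
  SimplexCategory.mkHom
    { toFun := fun i => Fin.cases 0 (fun i' => (f.toOrderHom i').succ) i
      monotone' := by
        intro a b hab
        induction a using Fin.cases with
        | zero => simp [Fin.zero_le]
        | succ a' =>
          induction b using Fin.cases with
          | zero =>
            exact absurd (Fin.le_zero_iff.mp hab) (Fin.succ_ne_zero a')
          | succ b' =>
            simp only [Fin.cases_succ]
            exact Fin.succ_le_succ_iff.mpr
              (f.toOrderHom.monotone (Fin.succ_le_succ_iff.mp hab)) }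

open SimplexCategory CategoryTheory in
/-- The suspension functor `S′ : Δ → Δ`, `[n] ↦ [n+1]`,
`(S′α)(0) = 0`, `(S′α)(i) = α(i-1)+1` for `i ≥ 1`. -/
def suspFunctor : CategoryTheory.Functor SimplexCategory SimplexCategory where
  obj x := SimplexCategory.mk (x.len + 1)
  map f := suspMor f
  map_id x := by
    apply SimplexCategory.Hom.ext
    ext i
    induction i using Fin.cases with
    | zero => rfl
    | succ i' => rfl
  map_comp f g := by
    apply SimplexCategory.Hom.ext
    ext i
    induction i using Fin.cases with
    | zero => rfl
    | succ i' => rfl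

open SVS in
/-- The term `S(δ ∘ D_{i-1,j}) ∘ (id ⊗ s₀) : V_i ⊗ W_j → V_{i+j-1} ⊗ W_{i+j-1}`,
i.e. the suspension of the composite `δ ∘ D_{i-1,j} : V_{i-1} ⊗ W_j → V_{i+j-2} ⊗ W_{i+j-2}`
(evaluated at the suspended simplicial vector spaces), precomposed with `id ⊗ s₀`;
any term involving a negative index is zero. -/
def SdelDTerm (V W : SVS) (i j : ℕ) : TT V W i j →ₗ[ZMod 2] TT V W (i+j-1) (i+j-1) :=
  match i with
  | 0 => 0
  | i'+1 =>
    if h : 1 ≤ i' + j then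
      ((tcast V W (show i'+j-1+1 = i'+1+j-1 by omega) (show i'+j-1+1 = i'+1+j-1 by omega)).comp
        ((delMap (susp V) (susp W) (i'+j) (i'+j)).comp
          (Dmap (susp V) (susp W) i' j))).comp
        (TensorProduct.map LinearMap.id (W.s j 0))
    else 0

/-- The term `D_{i-1,j} ∘ (d₀ ⊗ id) : V_i ⊗ W_j → V_{i+j-1} ⊗ W_{i+j-1}`
(zero if `i = 0`). -/
def Dd0Term (V W : SVS) (i j : ℕ) : TT V W i j →ₗ[ZMod 2] TT V W (i+j-1) (i+j-1) :=
  match i with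
  | 0 => 0
  | i'+1 =>
    (tcast V W (show i'+j = i'+1+j-1 by omega) (show i'+j = i'+1+j-1 by omega)).comp
      ((Dmap V W i' j).comp (TensorProduct.map (V.d (i'+1) 0) LinearMap.id))

section Aux

lemma SVS.xcast_cast (V : SVS) {m n : ℕ} (h : m = n) (x : V.X m) :
    V.xcast h x = cast (congrArg V.X h) x := by subst h; rfl

lemma tcast_cast (V W : SVS) {a b c e : ℕ} (h1 : a = c) (h2 : b = e) (u : TT V W a b) :
    tcast V W h1 h2 u = cast (show TT V W a b = TT V W c e by rw [h1, h2]) u := by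
  subst h1; subst h2
  have : tcast V W (Eq.refl a) (Eq.refl b) = LinearMap.id := by
    rw [show tcast V W (Eq.refl a) (Eq.refl b)
        = TensorProduct.map LinearMap.id LinearMap.id from rfl, TensorProduct.map_id]
  rw [this]; rfl

lemma SAlg.acast_cast (R : SAlg) {m n : ℕ} (h : m = n) (x : R.X m) :
    R.acast h x = cast (congrArg R.X h) x := by subst h; rfl

lemma cast_self {A : Type} (h : A = A) (x : A) : cast h x = x := rfl

end Aux
section Aux2
open SVS

lemma xcast_heq (V : SVS) {m n : ℕ} (h : m = n) (x : V.X m) :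
    HEq (V.xcast h x) x := by subst h; rfl

lemma sIter_susp_heq (V : SVS) (l : List ℕ) : ∀ (n : ℕ) (x : V.X (n+1)),
    HEq (sIter (susp V) l n x) (sIter V (l.map (·+1)) (n+1) x) := by
  induction l with
  | nil => intro n x; rfl
  | cons a t ih =>
    intro n x
    refine HEq.trans (HEq.trans ?_ (ih (n+1) ((susp V).s n a x))) ?_
    · exact xcast_heq (susp V) _ (sIter (susp V) t (n+1) ((susp V).s n a x))
    · exact (xcast_heq V _ (sIter V (t.map (·+1)) (n+1+1) (V.s (n+1) (a+1) x))).symm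

lemma sIterTo_susp (V : SVS) (l : List ℕ) (n m : ℕ)
    (h : n + l.length = m) (h' : (n+1) + (l.map (·+1)).length = m+1) (x : V.X (n+1)) :
    sIterTo (susp V) n m l h x = sIterTo V (n+1) (m+1) (l.map (·+1)) h' x := by
  refine eq_of_heq (HEq.trans (HEq.trans (xcast_heq (susp V) h _) ?_)
    (xcast_heq V h' _).symm)
  exact sIter_susp_heq V l n x

lemma sIterTo_cons (V : SVS) (a : ℕ) (t : List ℕ) (q m : ℕ)
    (h : q + (a::t).length = m) (h' : (q+1) + t.length = m) (x : V.X q) :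
    sIterTo V q m (a::t) h x = sIterTo V (q+1) m t h' (V.s q a x) := by
  refine eq_of_heq (HEq.trans (xcast_heq V h _) (HEq.trans (HEq.trans
    (xcast_heq V _ (sIter V t (q+1) (V.s q a x))) ?_) (xcast_heq V h' _).symm))
  rfl

lemma sIterTo_list_congr (V : SVS) {q m : ℕ} {l l' : List ℕ} (hl : l = l')
    (h : q + l.length = m) (h' : q + l'.length = m) (x : V.X q) :
    sIterTo V q m l h x = sIterTo V q m l' h' x := by subst hl; rfl

end Aux2
section Aux3
open SVS

lemma Dmap_tmul (V W : SVS) (i j : ℕ) (z : V.X i) (w : W.X j) :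
    Dmap V W i j (z ⊗ₜ[ZMod 2] w)
      = ∑ p ∈ (shuffles i j).attach,
          (sIterTo V i (i+j) (sortAsc p.1.2)
              (by rw [length_sortAsc, shuffles_card₂ p.2]) z) ⊗ₜ[ZMod 2]
          (sIterTo W j (i+j) (sortAsc p.1.1)
              (by rw [length_sortAsc, shuffles_card₁ p.2]; omega) w) := by
  simp [Dmap, LinearMap.sum_apply, TensorProduct.map_tmul]

lemma Dk_zero (V W : SVS) (i j : ℕ) : Dk 0 V W i j = D0 V W i j := rfl

lemma D0_succ (V W : SVS) (i' j : ℕ) :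
    D0 V W (i'+1) j =
      (tcast V W (show i'+j+1 = i'+1+j by omega) (show i'+j+1 = i'+1+j by omega)).comp
        ((Dmap (susp V) (susp W) i' j).comp
          (TensorProduct.map LinearMap.id (W.s j 0))) := rfl

lemma Dk_succ (k : ℕ) (V W : SVS) (i' j' : ℕ) :
    Dk (k+1) V W (i'+1) (j'+1) =
      ((if h : k ≤ i' + j' then
         (tcast V W (show i'+j'-k+1 = i'+1+(j'+1)-(k+1) by omega)
            (show i'+j'-k+1 = i'+1+(j'+1)-(k+1) by omega)).comp
           (Dk k (susp V) (susp W) i' j')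
       else 0) :
        TT V W (i'+1) (j'+1) →ₗ[ZMod 2] TT V W (i'+1+(j'+1)-(k+1)) (i'+1+(j'+1)-(k+1)))
      +
      (if (k+1) % 2 = 0 then
         (tcast V W (show i'+(j'+1)-k = i'+1+(j'+1)-(k+1) by omega)
            (show i'+(j'+1)-k = i'+1+(j'+1)-(k+1) by omega)).comp
           ((Dk k V W i' (j'+1)).comp (TensorProduct.map (V.d (i'+1) 0) LinearMap.id))
       else
         (tcast V W (show (i'+1)+j'-k = i'+1+(j'+1)-(k+1) by omega)
            (show (i'+1)+j'-k = i'+1+(j'+1)-(k+1) by omega)).comp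
           ((Dk k V W (i'+1) j').comp (TensorProduct.map LinearMap.id (W.d (j'+1) 0)))) := rfl

end Aux3

section Applied
open SVS

lemma D0_succ_apply (V W : SVS) (i' j : ℕ) (u : TT V W (i'+1) j) :
    D0 V W (i'+1) j u =
      tcast V W (show i'+j+1 = i'+1+j by omega) (show i'+j+1 = i'+1+j by omega)
        ((Dmap (susp V) (susp W) i' j)
          ((TensorProduct.map (LinearMap.id : V.X (i'+1) →ₗ[ZMod 2] V.X (i'+1)) (W.s j 0)) u)) := rfl

lemma Dk_succ_apply (k : ℕ) (V W : SVS) (i' j' : ℕ) (u : TT V W (i'+1) (j'+1)) :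
    Dk (k+1) V W (i'+1) (j'+1) u =
      (if h : k ≤ i' + j' then
         tcast V W (show i'+j'-k+1 = i'+1+(j'+1)-(k+1) by omega)
            (show i'+j'-k+1 = i'+1+(j'+1)-(k+1) by omega)
           ((Dk k (susp V) (susp W) i' j') u)
       else 0)
      +
      (if (k+1) % 2 = 0 then
         tcast V W (show i'+(j'+1)-k = i'+1+(j'+1)-(k+1) by omega)
            (show i'+(j'+1)-k = i'+1+(j'+1)-(k+1) by omega)
           ((Dk k V W i' (j'+1))
             ((TensorProduct.map (V.d (i'+1) 0)
               (LinearMap.id : W.X (j'+1) →ₗ[ZMod 2] W.X (j'+1))) u))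
       else
         tcast V W (show (i'+1)+j'-k = i'+1+(j'+1)-(k+1) by omega)
            (show (i'+1)+j'-k = i'+1+(j'+1)-(k+1) by omega)
           ((Dk k V W (i'+1) j')
             ((TensorProduct.map (LinearMap.id : V.X (i'+1) →ₗ[ZMod 2] V.X (i'+1))
               (W.d (j'+1) 0)) u))) := by
  rw [Dk_succ, LinearMap.add_apply]
  congr 1
  · by_cases h : k ≤ i' + j'
    · rw [dif_pos h, dif_pos h]; rfl
    · rw [dif_neg h, dif_neg h]; rfl
  · by_cases hp : (k+1) % 2 = 0
    · rw [if_pos hp, if_pos hp]; rfl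
    · rw [if_neg hp, if_neg hp]; rfl
end Applied
section Aux4
open SVS

lemma Dk_core (k : ℕ) : ∀ (V W : SVS) (a₀ b₀ : ℕ) (z : V.X (a₀+k+1)) (w : W.X (b₀+k+1))
    (hz : ∀ j ≤ k, V.d (a₀+k+1) j z = 0) (hw : ∀ j ≤ k, W.d (b₀+k+1) j w = 0),
    Dk k V W (a₀+k+1) (b₀+k+1) (z ⊗ₜ[ZMod 2] w)
      = tcast V W (show a₀+b₀+k+2 = (a₀+k+1)+(b₀+k+1)-k by omega)
          (show a₀+b₀+k+2 = (a₀+k+1)+(b₀+k+1)-k by omega)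
        (∑ p ∈ (shuffles a₀ (b₀+1)).attach,
          (sIterTo V (a₀+k+1) (a₀+b₀+k+2) ((sortAsc p.1.2).map (·+(k+1)))
            (by rw [List.length_map, length_sortAsc, shuffles_card₂ p.2]; omega) z) ⊗ₜ[ZMod 2]
          (sIterTo W (b₀+k+1) (a₀+b₀+k+2) (k :: (sortAsc p.1.1).map (·+(k+1)))
            (by simp only [List.length_cons, List.length_map, length_sortAsc,
                shuffles_card₁ p.2]; omega) w)) := by
  induction k with
  | zero =>
    intro V W a₀ b₀ z w hz hw
    rw [show Dk 0 V W (a₀+0+1) (b₀+0+1) (z ⊗ₜ[ZMod 2] w)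
        = D0 V W (a₀+0+1) (b₀+0+1) (z ⊗ₜ[ZMod 2] w) from rfl,
      D0_succ_apply, TensorProduct.map_tmul]
    erw [Dmap_tmul]
    erw [tcast_cast, tcast_cast]
    apply eq_of_heq
    refine HEq.trans (cast_heq _ _) (HEq.trans (heq_of_eq ?_) (cast_heq _ _).symm)
    refine Finset.sum_congr rfl ?_
    intro p _
    refine congrArg₂ (fun x y => x ⊗ₜ[ZMod 2] y) ?_ ?_
    · exact sIterTo_susp V _ _ _ _ (by rw [List.length_map, length_sortAsc, shuffles_card₂ p.2]; omega) (LinearMap.id z)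
    · refine Eq.trans (sIterTo_susp W _ _ _ _ (by rw [List.length_map, length_sortAsc, shuffles_card₁ p.2]; omega) (W.s (b₀+0+1) 0 w)) ?_
      exact (sIterTo_cons W 0 _ _ _ _ (by rw [List.length_map, length_sortAsc, shuffles_card₁ p.2]; omega) w).symm
  | succ k ih =>
    intro V W a₀ b₀ z w hz hw
    have hz' : ∀ j ≤ k, (susp V).d (a₀+k+1) j z = 0 := fun j hj => hz (j+1) (by omega)
    have hw' : ∀ j ≤ k, (susp W).d (b₀+k+1) j w = 0 := fun j hj => hw (j+1) (by omega)
    have IH' := ih (susp V) (susp W) a₀ b₀ z w hz' hw'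
    rw [tcast_cast] at IH'
    rw [Dk_succ_apply, dif_pos (show k ≤ (a₀+(k+1)) + (b₀+(k+1)) by omega)]
    have h0 : ∀ u : TT V W ((a₀+(k+1))+1) ((b₀+(k+1))+1), u = z ⊗ₜ[ZMod 2] w →
        (if (k+1) % 2 = 0 then
         tcast V W (show (a₀+(k+1))+((b₀+(k+1))+1)-k = (a₀+(k+1))+1+((b₀+(k+1))+1)-(k+1) by omega)
            (show (a₀+(k+1))+((b₀+(k+1))+1)-k = (a₀+(k+1))+1+((b₀+(k+1))+1)-(k+1) by omega)
           ((Dk k V W (a₀+(k+1)) ((b₀+(k+1))+1))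
             ((TensorProduct.map (V.d ((a₀+(k+1))+1) 0)
               (LinearMap.id : W.X ((b₀+(k+1))+1) →ₗ[ZMod 2] W.X ((b₀+(k+1))+1))) u))
       else
         tcast V W (show ((a₀+(k+1))+1)+(b₀+(k+1))-k = (a₀+(k+1))+1+((b₀+(k+1))+1)-(k+1) by omega)
            (show ((a₀+(k+1))+1)+(b₀+(k+1))-k = (a₀+(k+1))+1+((b₀+(k+1))+1)-(k+1) by omega)
           ((Dk k V W ((a₀+(k+1))+1) (b₀+(k+1)))
             ((TensorProduct.map (LinearMap.id : V.X ((a₀+(k+1))+1) →ₗ[ZMod 2] V.X ((a₀+(k+1))+1))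
               (W.d ((b₀+(k+1))+1) 0)) u))) = 0 := by
      intro u hu; subst hu
      by_cases hp : (k+1) % 2 = 0
      · rw [if_pos hp, TensorProduct.map_tmul, hz 0 (by omega)]
        simp only [TensorProduct.zero_tmul, map_zero]
      · rw [if_neg hp, TensorProduct.map_tmul, hw 0 (by omega)]
        simp only [TensorProduct.tmul_zero, map_zero]
    rw [h0 _ rfl, add_zero]; erw [tcast_cast, tcast_cast]
    refine Eq.trans (congrArg _ IH') ?_
    erw [cast_cast]
    apply eq_of_heq
    refine HEq.trans (cast_heq _ _) (HEq.trans (heq_of_eq ?_) (cast_heq _ _).symm)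
    refine Finset.sum_congr rfl ?_
    intro p _
    refine congrArg₂ (fun x y => x ⊗ₜ[ZMod 2] y) ?_ ?_
    · refine Eq.trans (sIterTo_susp V _ _ _ _ (by rw [List.length_map, List.length_map, length_sortAsc, shuffles_card₂ p.2]; omega) z) ?_
      exact sIterTo_list_congr V (by rw [List.map_map]; rfl) _ _ z
    · refine Eq.trans (sIterTo_susp W _ _ _ _ (by simp only [List.length_cons, List.length_map, length_sortAsc, shuffles_card₁ p.2]; omega) w) ?_
      exact sIterTo_list_congr W (by rw [List.map_cons, List.map_map]; rfl) _ _ w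

end Aux4
section Aux5

lemma sortAsc_image_add (s : Finset ℕ) (c : ℕ) :
    sortAsc (s.image (·+c)) = (sortAsc s).map (·+c) := by
  refine (fun hp h1 h2 => List.Perm.eq_of_pairwise' h1 h2 hp) ?_ (Finset.pairwise_sort _ _) ?_
  · rw [← Multiset.coe_eq_coe]
    unfold sortAsc
    rw [Finset.sort_eq, Finset.image_val_of_injOn (Set.injOn_of_injective (add_left_injective c)),
      ← Multiset.map_coe, Finset.sort_eq]
  · exact List.Pairwise.map _ (fun a b hab => by omega) (Finset.pairwise_sort _ _)

lemma sortAsc_insert_bot (a : ℕ) (s : Finset ℕ) (h1 : ∀ b ∈ s, a ≤ b) (h2 : a ∉ s) :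
    sortAsc (insert a s) = a :: sortAsc s :=
  Finset.sort_insert _ h1 h2

lemma sIterA_eq (R : SAlg) (l : List ℕ) : ∀ (q : ℕ) (z : R.X q),
    sIterA R l q z = sIter R.toSVS l q z := by
  induction l with
  | nil => intro q z; rfl
  | cons a t ih =>
    intro q z
    show R.acast _ (sIterA R t (q+1) (R.s q a z)) = R.toSVS.xcast _ (sIter R.toSVS t (q+1) (R.toSVS.s q a z))
    rw [SAlg.acast_cast, SVS.xcast_cast, ih (q+1) (R.s q a z)]
    rfl

lemma sIterATo_eq (R : SAlg) (q m : ℕ) (l : List ℕ) (h : q + l.length = m) (z : R.X q) :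
    sIterATo R q m l h z = sIterTo R.toSVS q m l h z := by
  show R.acast _ (sIterA R l q z) = R.toSVS.xcast _ (sIter R.toSVS l q z)
  rw [SAlg.acast_cast, SVS.xcast_cast, sIterA_eq]
  rfl

lemma mulMap_tmul (R : SAlg) (m : ℕ) (x y : R.X m) :
    mulMap R m (x ⊗ₜ[ZMod 2] y) = x * y := rfl

end Aux5
section Aux6

lemma mem_shuffles' {i j : ℕ} {p : Finset ℕ × Finset ℕ} :
    p ∈ shuffles i j ↔ p.1.card = i ∧ p.2.card = j ∧ Disjoint p.1 p.2 ∧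
      p.1 ∪ p.2 = Finset.range (i+j) := by
  simp only [shuffles, Finset.mem_filter, Finset.mem_product, Finset.mem_powersetCard]
  constructor
  · rintro ⟨⟨⟨-, h1⟩, -, h2⟩, h3, h4⟩; exact ⟨h1, h2, h3, h4⟩
  · rintro ⟨h1, h2, h3, h4⟩
    exact ⟨⟨⟨h4 ▸ Finset.subset_union_left, h1⟩, h4 ▸ Finset.subset_union_right, h2⟩, h3, h4⟩

lemma mem_deltaSet' {q i : ℕ} {p : Finset ℕ × Finset ℕ} :
    p ∈ deltaSet q i ↔ p.1.card = i ∧ p.2.card = i ∧ Disjoint p.1 p.2 ∧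
      p.1 ∪ p.2 = Finset.Ico (q-i) (q+i) ∧ q-i ∈ p.1 := by
  simp only [deltaSet, Finset.mem_filter, Finset.mem_product, Finset.mem_powersetCard]
  constructor
  · rintro ⟨⟨⟨-, h1⟩, -, h2⟩, h3, h4, h5⟩; exact ⟨h1, h2, h3, h4, h5⟩
  · rintro ⟨h1, h2, h3, h4, h5⟩
    exact ⟨⟨⟨h4 ▸ Finset.subset_union_left, h1⟩, h4 ▸ Finset.subset_union_right, h2⟩, h3, h4, h5⟩

variable {q i : ℕ}

/-- forward map of the bijection. -/
def Fmap (q i : ℕ) (p : Finset ℕ × Finset ℕ) : Finset ℕ × Finset ℕ :=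
  (insert (q-i) (p.1.image (·+(q-i+1))), p.2.image (·+(q-i+1)))

/-- backward map of the bijection. -/
def Gmap (q i : ℕ) (P : Finset ℕ × Finset ℕ) : Finset ℕ × Finset ℕ :=
  ((P.1.erase (q-i)).image (·-(q-i+1)), P.2.image (·-(q-i+1)))

lemma range_image_eq (h2 : 2 ≤ i) (hiq : i ≤ q) :
    (Finset.range ((i-1)+((i-1)+1))).image (·+(q-i+1)) = Finset.Ico (q-i+1) (q+i) := by
  ext x
  simp only [Finset.mem_image, Finset.mem_range, Finset.mem_Ico]
  constructor
  · rintro ⟨y, hy, rfl⟩; omega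
  · intro hx; exact ⟨x-(q-i+1), by omega, by omega⟩

lemma not_mem_image_shift (s : Finset ℕ) : q-i ∉ s.image (·+(q-i+1)) := by
  simp only [Finset.mem_image]
  rintro ⟨y, hy, e⟩; omega

lemma Fmap_mem (h2 : 2 ≤ i) (hiq : i ≤ q) {p : Finset ℕ × Finset ℕ}
    (hp : p ∈ shuffles (i-1) ((i-1)+1)) : Fmap q i p ∈ deltaSet q i := by
  obtain ⟨hc1, hc2, hdis, hun⟩ := mem_shuffles'.mp hp
  rw [mem_deltaSet']
  unfold Fmap
  refine ⟨?_, ?_, ?_, ?_, Finset.mem_insert_self _ _⟩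
  · rw [Finset.card_insert_of_notMem (not_mem_image_shift p.1),
      Finset.card_image_of_injective _ (add_left_injective _), hc1]; omega
  · rw [Finset.card_image_of_injective _ (add_left_injective _), hc2]; omega
  · rw [Finset.disjoint_insert_left]
    exact ⟨not_mem_image_shift p.2,
      (Finset.disjoint_image (add_left_injective _)).mpr hdis⟩
  · rw [Finset.insert_union, ← Finset.image_union, hun, range_image_eq h2 hiq,
      Finset.insert_Ico_add_one_left_eq_Ico (by omega)]

lemma Gmap_mem (h2 : 2 ≤ i) (hiq : i ≤ q) {P : Finset ℕ × Finset ℕ}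
    (hP : P ∈ deltaSet q i) : Gmap q i P ∈ shuffles (i-1) ((i-1)+1) := by
  obtain ⟨hc1, hc2, hdis, hun, hmem⟩ := mem_deltaSet'.mp hP
  have hsub1 : P.1 ⊆ Finset.Ico (q-i) (q+i) := hun ▸ Finset.subset_union_left
  have hsub2 : P.2 ⊆ Finset.Ico (q-i) (q+i) := hun ▸ Finset.subset_union_right
  have hge2 : ∀ x ∈ P.2, q-i+1 ≤ x := by
    intro x hx
    have := Finset.mem_Ico.mp (hsub2 hx)
    have hne : x ≠ q-i := by
      rintro rfl; exact (Finset.disjoint_left.mp hdis hmem) hx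
    omega
  have hge1 : ∀ x ∈ P.1.erase (q-i), q-i+1 ≤ x := by
    intro x hx
    have h1 := Finset.mem_of_mem_erase hx
    have := Finset.mem_Ico.mp (hsub1 h1)
    have := Finset.ne_of_mem_erase hx
    omega
  rw [mem_shuffles']
  unfold Gmap
  refine ⟨?_, ?_, ?_, ?_⟩
  · rw [Finset.card_image_of_injOn (fun x hx y hy e => by
        have := hge1 x hx; have := hge1 y hy; omega),
      Finset.card_erase_of_mem hmem, hc1]
  · rw [Finset.card_image_of_injOn (fun x hx y hy e => by
        have := hge2 x hx; have := hge2 y hy; omega), hc2]; omega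
  · rw [Finset.disjoint_left]
    intro a ha hb
    simp only [Finset.mem_image] at ha hb
    obtain ⟨x, hx, rfl⟩ := ha
    obtain ⟨y, hy, ey⟩ := hb
    have := hge1 x hx; have := hge2 y hy
    have hxy : x = y := by omega
    exact (Finset.disjoint_left.mp hdis (Finset.mem_of_mem_erase hx)) (hxy ▸ hy)
  · ext a
    simp only [Finset.mem_union, Finset.mem_image, Finset.mem_range,
      Finset.mem_erase]
    constructor
    · rintro (⟨x, ⟨hne, hx⟩, rfl⟩ | ⟨x, hx, rfl⟩)
      · have := Finset.mem_Ico.mp (hsub1 hx); omega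
      · have := Finset.mem_Ico.mp (hsub2 hx); have := hge2 x hx; omega
    · intro ha
      by_cases hcase : a + (q-i+1) ∈ P.1
      · exact Or.inl ⟨a + (q-i+1), ⟨by omega, hcase⟩, by omega⟩
      · have : a + (q-i+1) ∈ P.1 ∪ P.2 := by
          rw [hun, Finset.mem_Ico]; omega
        rcases Finset.mem_union.mp this with h | h
        · exact absurd h hcase
        · exact Or.inr ⟨a + (q-i+1), h, by omega⟩

lemma Gmap_Fmap (h2 : 2 ≤ i) (hiq : i ≤ q) (p : Finset ℕ × Finset ℕ) :
    Gmap q i (Fmap q i p) = p := by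
  unfold Fmap Gmap
  ext1
  · show ((insert (q-i) (p.1.image (·+(q-i+1)))).erase (q-i)).image (·-(q-i+1)) = p.1
    rw [Finset.erase_insert (not_mem_image_shift p.1), Finset.image_image]
    refine Eq.trans (Finset.image_congr (fun x _ => by simp only [Function.comp_apply, id_eq]; omega)) Finset.image_id
  · show (p.2.image (·+(q-i+1))).image (·-(q-i+1)) = p.2
    rw [Finset.image_image]
    refine Eq.trans (Finset.image_congr (fun x _ => by simp only [Function.comp_apply, id_eq]; omega)) Finset.image_id

lemma Fmap_Gmap (h2 : 2 ≤ i) (hiq : i ≤ q) {P : Finset ℕ × Finset ℕ}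
    (hP : P ∈ deltaSet q i) : Fmap q i (Gmap q i P) = P := by
  obtain ⟨hc1, hc2, hdis, hun, hmem⟩ := mem_deltaSet'.mp hP
  have hsub1 : P.1 ⊆ Finset.Ico (q-i) (q+i) := hun ▸ Finset.subset_union_left
  have hsub2 : P.2 ⊆ Finset.Ico (q-i) (q+i) := hun ▸ Finset.subset_union_right
  unfold Fmap Gmap
  ext1
  · show insert (q-i) (((P.1.erase (q-i)).image (·-(q-i+1))).image (·+(q-i+1))) = P.1
    rw [Finset.image_image]
    have : ((P.1.erase (q-i)).image ((·+(q-i+1)) ∘ (·-(q-i+1)))) = P.1.erase (q-i) := by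
      refine Eq.trans (Finset.image_congr (fun x hx => ?_)) Finset.image_id
      have h1 := Finset.mem_of_mem_erase hx
      have := Finset.mem_Ico.mp (hsub1 h1)
      have := Finset.ne_of_mem_erase hx
      simp only [Function.comp_apply, id_eq]; omega
    rw [this, Finset.insert_erase hmem]
  · show ((P.2.image (·-(q-i+1))).image (·+(q-i+1))) = P.2
    rw [Finset.image_image]
    refine Eq.trans (Finset.image_congr (fun x hx => ?_)) Finset.image_id
    have := Finset.mem_Ico.mp (hsub2 hx)
    have hne : x ≠ q-i := by
      rintro rfl; exact (Finset.disjoint_left.mp hdis hmem) hx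
    simp only [Function.comp_apply, id_eq]; omega

end Aux6
section Aux7
open SVS

lemma Dk_closed (V W : SVS) (k a₀ b₀ A B m : ℕ) (hA : A = a₀+k+1) (hB : B = b₀+k+1)
    (hm : m = a₀+b₀+k+2) (z : V.X A) (w : W.X B)
    (hz : ∀ j ≤ k, V.d A j z = 0) (hw : ∀ j ≤ k, W.d B j w = 0) :
    Dk k V W A B (z ⊗ₜ[ZMod 2] w)
      = tcast V W (show m = A+B-k by omega) (show m = A+B-k by omega)
        (∑ p ∈ (shuffles a₀ (b₀+1)).attach,
          (sIterTo V A m ((sortAsc p.1.2).map (·+(k+1)))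
            (by rw [List.length_map, length_sortAsc, shuffles_card₂ p.2]; omega) z) ⊗ₜ[ZMod 2]
          (sIterTo W B m (k :: (sortAsc p.1.1).map (·+(k+1)))
            (by simp only [List.length_cons, List.length_map, length_sortAsc,
                shuffles_card₁ p.2]; omega) w)) := by
  subst hA; subst hB; subst hm
  exact Dk_core k V W a₀ b₀ z w hz hw

end Aux7

theorem stmt_6 (R : SAlg) (hR : R.IsSimplicial) (q i : ℕ) (h2 : 2 ≤ i) (hiq : i ≤ q)
    (z : R.X q) (hz : ∀ j ≤ q, R.d q j z = 0) :
    mulMap R (q+i)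
      ((tcast R.toSVS R.toSVS (show q+q-(q-i) = q+i by omega) (show q+q-(q-i) = q+i by omega))
        ((Dk (q-i) R.toSVS R.toSVS q q) (z ⊗ₜ[ZMod 2] z)))
    = deltaOp R q i z := by
  have hD := Dk_closed R.toSVS R.toSVS (q-i) (i-1) (i-1) q q (q+i)
    (by omega) (by omega) (by omega) z z
    (fun j hj => hz j (by omega)) (fun j hj => hz j (by omega))
  rw [hD, tcast_cast, tcast_cast, cast_cast, cast_self]
  refine (map_sum (mulMap R (q+i)) _ _).trans ?_
  unfold deltaOp
  refine Finset.sum_bij'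
    (fun p _ => (⟨Fmap q i p.1, Fmap_mem h2 hiq p.2⟩ : {x // x ∈ deltaSet q i}))
    (fun P _ => (⟨Gmap q i P.1, Gmap_mem h2 hiq P.2⟩ :
      {x // x ∈ shuffles (i-1) ((i-1)+1)}))
    (fun p _ => Finset.mem_attach _ _) (fun P _ => Finset.mem_attach _ _)
    (fun p _ => Subtype.ext (Gmap_Fmap h2 hiq p.1))
    (fun P _ => Subtype.ext (Fmap_Gmap h2 hiq P.2))
    (fun p _ => ?_)
  refine (mulMap_tmul R (q+i) _ _).trans ?_
  rw [sIterATo_eq, sIterATo_eq]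
  refine congrArg₂ (fun a b => a * b) ?_ ?_
  · refine sIterTo_list_congr R.toSVS ?_ _ _ z
    rw [show (Fmap q i p.1).2 = p.1.2.image (·+(q-i+1)) from rfl, sortAsc_image_add]
  · refine sIterTo_list_congr R.toSVS ?_ _ _ z
    rw [show (Fmap q i p.1).1 = insert (q-i) (p.1.1.image (·+(q-i+1))) from rfl,
      sortAsc_insert_bot _ _ (fun b hb => by
        simp only [Finset.mem_image] at hb; omega) (not_mem_image_shift _),
      sortAsc_image_add]
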